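/- Let G : ℕ → ℝ satisfy G 0 = 0, G 1 = 1 and G (n+2) = 4·G (n+1) - G n for all n ≥ 0. Then for every positive integer n, the finite sum over k from 0 to n-1 of 1/(1 + 2·sin²(kπ/(2n))) equals 1/3 + n·G (2n)/(6·(G n)²). -/

import Mathlib

open Real

open Finset in
lemma sum_inv_pow_sub (N : ℕ) (hN : 0 < N) (ω c : ℂ)
    (hω : ∀ j : ℕ, 0 < j → j < N → ω ^ j ≠ 1) (hω1 : ω ^ N = 1) (hc : c ^ N ≠ 1) :
    ∑ k ∈ range N, (ω ^ k - c)⁻¹ = N * c ^ (N - 1) / (1 - c ^ N) := by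
  have h1 : (1 : ℂ) - c ^ N ≠ 0 := sub_ne_zero.mpr (Ne.symm hc)
  have hterm : ∀ k ∈ range N, (ω ^ k - c)⁻¹
      = (∑ i ∈ range N, (ω ^ k) ^ i * c ^ (N - 1 - i)) / (1 - c ^ N) := by
    intro k _
    have hk : ω ^ k - c ≠ 0 := by
      intro h
      have hcw : c = ω ^ k := by linear_combination -h
      apply hc
      rw [hcw, ← pow_mul, mul_comm, pow_mul, hω1, one_pow]
    rw [eq_div_iff h1]
    have := geom_sum₂_mul (ω ^ k) c N
    rw [← pow_mul, mul_comm k N, pow_mul, hω1, one_pow] at this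
    rw [← this]
    field_simp
  rw [Finset.sum_congr rfl hterm, ← Finset.sum_div, Finset.sum_comm]
  congr 1
  have hinner : ∀ i ∈ range N, (∑ k ∈ range N, (ω ^ k) ^ i * c ^ (N - 1 - i))
      = (if i = 0 then (N : ℂ) * c ^ (N - 1) else 0) := by
    intro i hi
    rw [mem_range] at hi
    rcases Nat.eq_zero_or_pos i with h0 | h0
    · simp [h0]
    · rw [if_neg h0.ne']
      have : ∀ k, (ω ^ k) ^ i = (ω ^ i) ^ k := by
        intro k; rw [← pow_mul, mul_comm, pow_mul]
      simp_rw [this, ← Finset.sum_mul]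
      have hne : ω ^ i ≠ 1 := hω i h0 hi
      rw [geom_sum_eq hne]
      rw [← pow_mul, mul_comm i N, pow_mul, hω1, one_pow]
      simp
  rw [Finset.sum_congr rfl hinner, Finset.sum_ite_eq' (range N) 0]
  simp [hN]

open Finset in
lemma term_eq (s z : ℂ) (hs : s ^ 2 = 3) (hz : z ≠ 0) (hza : z - (2 + s) ≠ 0)
    (hzb : z - (2 - s) ≠ 0) (hs0 : s ≠ 0) :
    (2 - (z + z⁻¹) / 2)⁻¹ = ((2 - s) * (z - (2 - s))⁻¹ - (2 + s) * (z - (2 + s))⁻¹) / s := by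
  apply inv_eq_of_mul_eq_one_right
  field_simp
  ring_nf
  linear_combination (2*z*s) * hs

open Finset in
lemma complex_sum (n : ℕ) (hn : 0 < n) :
    ∑ k ∈ Finset.range (2 * n), (2 - Real.cos ((k : ℝ) * π / n))⁻¹
      = 2 * n * ((2 + Real.sqrt 3) ^ n + (2 - Real.sqrt 3) ^ n)
        / (Real.sqrt 3 * ((2 + Real.sqrt 3) ^ n - (2 - Real.sqrt 3) ^ n)) := by
  -- real facts
  have h3 : (1:ℝ) < Real.sqrt 3 := by
    rw [show (1:ℝ) = Real.sqrt 1 by simp]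
    exact Real.sqrt_lt_sqrt (by norm_num) (by norm_num)
  have h32 : Real.sqrt 3 < 2 := by
    rw [show (2:ℝ) = Real.sqrt 4 by rw [show (4:ℝ) = 2^2 by norm_num, Real.sqrt_sq]; norm_num]
    exact Real.sqrt_lt_sqrt (by norm_num) (by norm_num)
  set sr : ℝ := Real.sqrt 3 with hsr
  have hαr : (1:ℝ) < 2 + sr := by linarith
  have hβr0 : (0:ℝ) < 2 - sr := by linarith
  have hβr1 : 2 - sr < 1 := by linarith
  have han : (1:ℝ) < (2+sr)^n := one_lt_pow₀ hαr hn.ne'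
  have hbn : (2-sr)^n < 1 := pow_lt_one₀ hβr0.le hβr1 hn.ne'
  have hbn0 : (0:ℝ) < (2-sr)^n := pow_pos hβr0 n
  have hab : (2-sr)^n < (2+sr)^n := by
    apply pow_lt_pow_left₀ (by linarith) hβr0.le hn.ne'
  have hs0r : sr ≠ 0 := by positivity
  -- move to ℂ
  apply Complex.ofReal_inj.mp
  push_cast
  set s : ℂ := (sr : ℂ) with hsdef
  have hs : s ^ 2 = 3 := by
    rw [hsdef]; norm_cast; rw [hsr, Real.sq_sqrt]; norm_num
  have hs0 : s ≠ 0 := by rwa [hsdef, Complex.ofReal_ne_zero]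
  set N := 2 * n with hN
  have hNpos : 0 < N := by omega
  have hnC : (n : ℂ) ≠ 0 := Nat.cast_ne_zero.mpr hn.ne'
  set ω : ℂ := Complex.exp (2 * π * Complex.I / N) with hω
  have hprim : IsPrimitiveRoot ω N := Complex.isPrimitiveRoot_exp N hNpos.ne'
  have hω1 : ω ^ N = 1 := hprim.pow_eq_one
  have hωj : ∀ j : ℕ, 0 < j → j < N → ω ^ j ≠ 1 := fun j h1 h2 =>
    hprim.pow_ne_one_of_pos_of_lt h1.ne' h2
  -- c^N facts
  have hcN : ∀ c : ℝ, c ^ N ≠ 1 → ((c:ℂ)) ^ N ≠ 1 := by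
    intro c hc h
    apply hc
    have : ((c ^ N : ℝ) : ℂ) = ((1:ℝ) : ℂ) := by push_cast; simpa using h
    exact_mod_cast this
  have haN : ((2+s)) ^ N ≠ 1 := by
    have : ((2:ℝ)+sr) ^ N ≠ 1 := by
      have := one_lt_pow₀ hαr hNpos.ne'
      linarith
    simpa [hsdef] using hcN (2+sr) this
  have hbN : ((2-s)) ^ N ≠ 1 := by
    have : ((2:ℝ)-sr) ^ N ≠ 1 := by
      have := pow_lt_one₀ hβr0.le hβr1 hNpos.ne'
      linarith
    simpa [hsdef] using hcN (2-sr) this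
  -- per-term rewrite
  have hterm : ∀ k ∈ range N, (2 - Complex.cos ((k:ℂ) * π / n))⁻¹
      = ((2 - s) * (ω ^ k - (2 - s))⁻¹ - (2 + s) * (ω ^ k - (2 + s))⁻¹) / s := by
    intro k _
    have hzk : ω ^ k = Complex.exp (((k:ℂ) * π / n) * Complex.I) := by
      rw [hω, ← Complex.exp_nat_mul]
      congr 1
      push_cast [hN]
      field_simp
    have hcos : Complex.cos ((k:ℂ) * π / n) = (ω ^ k + (ω ^ k)⁻¹) / 2 := by
      rw [Complex.cos, hzk, ← Complex.exp_neg, neg_mul]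
    have hz0 : ω ^ k ≠ 0 := by rw [hzk]; exact Complex.exp_ne_zero _
    have hza : ω ^ k - (2 + s) ≠ 0 := by
      intro h
      apply haN
      have : (2 + s) = ω ^ k := by linear_combination -h
      rw [this, ← pow_mul, mul_comm, pow_mul, hω1, one_pow]
    have hzb : ω ^ k - (2 - s) ≠ 0 := by
      intro h
      apply hbN
      have : (2 - s) = ω ^ k := by linear_combination -h
      rw [this, ← pow_mul, mul_comm, pow_mul, hω1, one_pow]
    rw [hcos]
    exact term_eq s (ω ^ k) hs hz0 hza hzb hs0
  rw [Finset.sum_congr rfl hterm]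
  have hsplit : ∑ k ∈ range N, ((2 - s) * (ω ^ k - (2 - s))⁻¹ - (2 + s) * (ω ^ k - (2 + s))⁻¹) / s
      = ((2-s) * ∑ k ∈ range N, (ω ^ k - (2 - s))⁻¹
        - (2+s) * ∑ k ∈ range N, (ω ^ k - (2 + s))⁻¹) / s := by
    rw [Finset.mul_sum, Finset.mul_sum, ← Finset.sum_sub_distrib, Finset.sum_div]
  rw [hsplit, sum_inv_pow_sub N hNpos ω _ hωj hω1 hbN,
      sum_inv_pow_sub N hNpos ω _ hωj hω1 haN]
  -- final algebra
  have hpowa : (2+s) ^ N = ((2+s) ^ n) ^ 2 := by rw [hN, mul_comm, pow_mul]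
  have hpowb : (2-s) ^ N = ((2-s) ^ n) ^ 2 := by rw [hN, mul_comm, pow_mul]
  have hpowa' : (2+s) * (2+s) ^ (N-1) = ((2+s) ^ n) ^ 2 := by
    rw [← hpowa, ← pow_succ']
    congr 1
    omega
  have hpowb' : (2-s) * (2-s) ^ (N-1) = ((2-s) ^ n) ^ 2 := by
    rw [← hpowb, ← pow_succ']
    congr 1
    omega
  have habm : ((2+s) ^ n) * ((2-s) ^ n) = 1 := by
    rw [← mul_pow]
    have : (2+s)*(2-s) = 1 := by linear_combination -hs
    rw [this, one_pow]
  have h1a : 1 - ((2+s) ^ n) ^ 2 ≠ 0 := by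
    rw [← hpowa]; intro h
    exact haN (by linear_combination -h)
  have h1b : 1 - ((2-s) ^ n) ^ 2 ≠ 0 := by
    rw [← hpowb]; intro h
    exact hbN (by linear_combination -h)
  have habne : (2+s) ^ n - (2-s) ^ n ≠ 0 := by
    rw [hsdef]
    intro h
    have h2 : (((2+sr)^n : ℝ) : ℂ) = (((2-sr)^n : ℝ) : ℂ) := by
      push_cast
      linear_combination h
    have := Complex.ofReal_inj.mp h2
    linarith
  have ka : (2+s) * ((N:ℂ) * (2+s)^(N-1)/(1-(2+s)^N)) = (N:ℂ) * ((2+s) ^ n)^2/(1-((2+s) ^ n)^2) := by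
    rw [← mul_div_assoc, hpowa, mul_left_comm, hpowa']
  have kb : (2-s) * ((N:ℂ) * (2-s)^(N-1)/(1-(2-s)^N)) = (N:ℂ) * ((2-s) ^ n)^2/(1-((2-s) ^ n)^2) := by
    rw [← mul_div_assoc, hpowb, mul_left_comm, hpowb']
  rw [kb, ka]
  push_cast [hN]
  field_simp
  ring_nf
  linear_combination (-((2+s)^n+(2-s)^n)*((2+s)^n*(2-s)^n-1)) * habm

open Finset in
lemma half_sum (n : ℕ) (hn : 0 < n)
    (hT : ∑ k ∈ Finset.range (2 * n), (2 - Real.cos ((k : ℝ) * π / n))⁻¹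
      = 2 * n * ((2 + Real.sqrt 3) ^ n + (2 - Real.sqrt 3) ^ n)
        / (Real.sqrt 3 * ((2 + Real.sqrt 3) ^ n - (2 - Real.sqrt 3) ^ n))) :
    ∑ k ∈ Finset.range n, (2 - Real.cos ((k : ℝ) * π / n))⁻¹
      = 1/3 + n * ((2 + Real.sqrt 3) ^ n + (2 - Real.sqrt 3) ^ n)
        / (Real.sqrt 3 * ((2 + Real.sqrt 3) ^ n - (2 - Real.sqrt 3) ^ n)) := by
  set F : ℕ → ℝ := fun k => (2 - Real.cos ((k : ℝ) * π / n))⁻¹ with hF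
  have hnR : (n : ℝ) ≠ 0 := Nat.cast_ne_zero.mpr hn.ne'
  have hF0 : F 0 = 1 := by simp [hF]; norm_num
  have hFn : F n = 1/3 := by
    have : ((n:ℝ) * π / n) = π := by field_simp
    simp [hF, this, Real.cos_pi]
    norm_num
  have h2n : 2 * n - n = n := by omega
  have hsplit : ∑ k ∈ range (2*n), F k = ∑ k ∈ range n, F k + ∑ k ∈ range n, F (n + k) := by
    rw [show range (2*n) = Ico 0 (2*n) from Finset.range_eq_Ico _,
      ← Finset.sum_Ico_consecutive F (Nat.zero_le n) (by omega : n ≤ 2*n),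
      show Ico 0 n = range n from (Finset.range_eq_Ico n).symm]
    congr 1
    rw [Finset.sum_Ico_eq_sum_range, h2n]
  have hrefl : ∑ k ∈ range n, F (n + k) = ∑ k ∈ range n, F (k + 1) := by
    rw [← Finset.sum_range_reflect (fun k => F (n + k)) n]
    apply Finset.sum_congr rfl
    intro k hk
    rw [mem_range] at hk
    have h1 : n + (n - 1 - k) = 2 * n - (k+1) := by omega
    rw [h1]
    have hcos : Real.cos (((2*n - (k+1) : ℕ):ℝ) * π / n) = Real.cos (((k+1 : ℕ):ℝ) * π / n) := by
      have hcast : ((2*n - (k+1) : ℕ) : ℝ) = 2*n - ((k:ℝ)+1) := by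
        push_cast [Nat.cast_sub (by omega : k+1 ≤ 2*n)]
        ring
      rw [hcast]
      have harg : (2*(n:ℝ) - ((k:ℝ)+1)) * π / n = 2*π - ((k:ℝ)+1) * π / n := by
        field_simp
      rw [harg, Real.cos_sub, Real.cos_two_pi, Real.sin_two_pi]
      push_cast
      ring_nf
    simp only [hF]
    rw [hcos]
  have hshift : ∑ k ∈ range n, F (k + 1) = ∑ k ∈ range n, F k + F n - F 0 := by
    have h1 := Finset.sum_range_succ' F n
    have h2 := Finset.sum_range_succ F n
    rw [h2] at h1
    linarith
  rw [hsplit, hrefl, hshift, hF0, hFn] at hT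
  have hS : ∑ k ∈ range n, F k
      = (2 * (n:ℝ) * ((2 + Real.sqrt 3) ^ n + (2 - Real.sqrt 3) ^ n)
        / (Real.sqrt 3 * ((2 + Real.sqrt 3) ^ n - (2 - Real.sqrt 3) ^ n))) / 2 + 1/3 := by
    linarith
  rw [hS]
  ring

open Finset in
lemma G_closed (G : ℕ → ℝ) (hG0 : G 0 = 0) (hG1 : G 1 = 1)
    (hGrec : ∀ n : ℕ, G (n + 2) = 4 * G (n + 1) - G n) :
    ∀ n : ℕ, G n = ((2 + Real.sqrt 3) ^ n - (2 - Real.sqrt 3) ^ n) / (2 * Real.sqrt 3) := by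
  have hs : Real.sqrt 3 ^ 2 = 3 := Real.sq_sqrt (by norm_num)
  have hs0 : Real.sqrt 3 ≠ 0 := by positivity
  intro n
  induction n using Nat.twoStepInduction with
  | zero => simp [hG0]
  | one => rw [hG1]; field_simp; ring
  | more n ih1 ih2 =>
    rw [hGrec, ih1, ih2]
    field_simp
    ring_nf
    linear_combination (((2-Real.sqrt 3)^n - (2+Real.sqrt 3)^n)) * hs

theorem trig_sum_fibonacci (G : ℕ → ℝ) (hG0 : G 0 = 0) (hG1 : G 1 = 1)
    (hGrec : ∀ n : ℕ, G (n + 2) = 4 * G (n + 1) - G n) :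
    ∀ n : ℕ, 0 < n →
      ∑ k ∈ Finset.range n, 1 / (1 + 2 * Real.sin ((k : ℝ) * π / (2 * n)) ^ 2)
        = 1 / 3 + (n : ℝ) * G (2 * n) / (6 * (G n) ^ 2) := by
  intro n hn
  have hGc := G_closed G hG0 hG1 hGrec
  have hhalf := half_sum n hn (complex_sum n hn)
  open Finset in
  have hnR : (n : ℝ) ≠ 0 := Nat.cast_ne_zero.mpr hn.ne'
  have hterm : ∀ k ∈ range n, 1 / (1 + 2 * Real.sin ((k:ℝ)*π/(2*n))^2)
      = (2 - Real.cos ((k:ℝ)*π/n))⁻¹ := by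
    intro k _
    have harg : (k:ℝ)*π/n = 2*((k:ℝ)*π/(2*n)) := by
      field_simp
    rw [harg, Real.cos_two_mul, one_div]
    congr 1
    have hpyth := Real.sin_sq_add_cos_sq ((k:ℝ)*π/(2*n))
    linarith
  rw [Finset.sum_congr rfl hterm, hhalf, hGc (2*n), hGc n]
  have hs : Real.sqrt 3 ^ 2 = 3 := Real.sq_sqrt (by norm_num)
  have hs0 : (0:ℝ) < Real.sqrt 3 := by positivity
  have h3 : (1:ℝ) < Real.sqrt 3 := by
    rw [show (1:ℝ) = Real.sqrt 1 by simp]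
    exact Real.sqrt_lt_sqrt (by norm_num) (by norm_num)
  have h32 : Real.sqrt 3 < 2 := by
    rw [show (2:ℝ) = Real.sqrt 4 by rw [show (4:ℝ) = 2^2 by norm_num, Real.sqrt_sq]; norm_num]
    exact Real.sqrt_lt_sqrt (by norm_num) (by norm_num)
  have hab : (2-Real.sqrt 3)^n < (2+Real.sqrt 3)^n :=
    pow_lt_pow_left₀ (by linarith) (by linarith) hn.ne'
  have habne : (2+Real.sqrt 3)^n - (2-Real.sqrt 3)^n ≠ 0 := by linarith
  have hpa : (2+Real.sqrt 3)^(2*n) = ((2+Real.sqrt 3)^n)^2 := by rw [mul_comm, pow_mul]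
  have hpb : (2-Real.sqrt 3)^(2*n) = ((2-Real.sqrt 3)^n)^2 := by rw [mul_comm, pow_mul]
  rw [hpa, hpb]
  have hs0' : Real.sqrt 3 ≠ 0 := hs0.ne'
  field_simp
  ring_nf
  linear_combination (-6*(n:ℝ)*(((2+Real.sqrt 3)^n)^2 - ((2-Real.sqrt 3)^n)^2)) * hs
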